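/- arXiv:2104.05558 — 4 statements merged into one kernel-verified Lean document; each statement's English description precedes it below -/
import Mathlib

section
/- In the wrong-extended big-step semantics, c ⇒ r with r ∈ R is inductively derivable if and only if c ⇒ r is inductively derivable in the original rules (adding the wrong result is conservative over convergence). -/
/-- Judgements over configurations `C` and extended results `Option R`
    (`none` stands for the special extra result such as `?`, `wrong`, or `∞`). -/
abbrev Judg (C R : Type) := C × Option R

/-- Lift a complete judgement to an extended judgement. -/
def liftJ {C R : Type} (j : C × R) : Judg C R := (j.1, some j.2)

/-- Bounded-premises condition. -/
def BP {C R : Type} (Rules : Set (List (C × R) × (C × R))) : Prop :=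
  ∀ c : C, ∃ b : ℕ, ∀ js res, (js, (c, res)) ∈ Rules → js.length ≤ b

/-- The extended rule set `Rules_?`: original rules (lifted), start axioms
    `c ⇒ ?`, and partial rules. -/
def RulesQ {C R : Type} (Rules : Set (List (C × R) × (C × R))) :
    Set (List (Judg C R) × Judg C R) :=
  { r | (∃ c : C, r = ([], (c, none)))
      ∨ (∃ (js : List (C × R)) (c : C) (res : R), (js, (c, res)) ∈ Rules ∧ r = (js.map liftJ, (c, some res)))
      ∨ (∃ (js : List (C × R)) (c : C) (res : R) (i : ℕ) (hi : i < js.length) (u : Option R),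
          (js, (c, res)) ∈ Rules ∧
          r = ((js.take i).map liftJ ++ [((js[i]'hi).1, u)], (c, none))) }

/-- Ordered trees labelled in `L`: partial functions from positions (lists of
    child indices) to labels, with nonempty, prefix-closed,
    sibling-downward-closed domain. -/
structure OTree (L : Type) where
  label : List ℕ → Option L
  root_isSome : (label []).isSome
  pref : ∀ α n, (label (α ++ [n])).isSome → (label α).isSome
  sib : ∀ α n k, (label (α ++ [n])).isSome → k ≤ n → (label (α ++ [k])).isSome

/-- A tree is an evaluation tree in a rule set: at every node, the ordered
    children labels together with the node label form a rule. -/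
def IsTreeIn {L : Type} (Rules : Set (List L × L)) (t : OTree L) : Prop :=
  ∀ α l, t.label α = some l →
    ∃ ps : List L, (∀ i : ℕ, t.label (α ++ [i]) = ps[i]?) ∧ (ps, l) ∈ Rules

/-- Partial evaluation trees: evaluation trees in `Rules_?`. -/
def IsPET {C R : Type} (Rules : Set (List (C × R) × (C × R)))
    (t : OTree (Judg C R)) : Prop :=
  IsTreeIn (RulesQ Rules) t

/-- The refinement relation `⊑` on trees labelled by possibly-incomplete
    judgements. -/
def TreeLE {C R : Type} (t t' : OTree (Judg C R)) : Prop :=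
  (∀ α, (t.label α).isSome → (t'.label α).isSome) ∧
  ∀ α c u, t.label α = some (c, u) →
    (∃ (u' : Option R), t'.label α = some (c, u')) ∧
    (u.isSome → ∀ β, t.label (α ++ β) = t'.label (α ++ β))

/-- Strict refinement `⊏`. -/
def TreeLT {C R : Type} (t t' : OTree (Judg C R)) : Prop :=
  TreeLE t t' ∧ t ≠ t'

/-- A tree is finite if its domain is finite. -/
def TreeFinite {L : Type} (t : OTree L) : Prop :=
  Set.Finite {α | (t.label α).isSome}

/-- Well-formedness: every subtree rooted at a complete node is finite. -/
def WellFormed {C R : Type} (t : OTree (Judg C R)) : Prop :=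
  ∀ α c r, t.label α = some (c, some r) →
    Set.Finite {β | (t.label (α ++ β)).isSome}

/-- `t` is a least upper bound of the sequence `f` w.r.t. `⊑`. -/
def IsLubSeq {C R : Type} (f : ℕ → OTree (Judg C R)) (t : OTree (Judg C R)) : Prop :=
  (∀ n, TreeLE (f n) t) ∧ ∀ t', (∀ n, TreeLE (f n) t') → TreeLE t t'

/-- Inductive derivability in a rule set with finite-list premises. -/
inductive IndDerives {J : Type} (Rules : Set (List J × J)) : J → Prop where
  | node (ps : List J) (j : J) : (ps, j) ∈ Rules →
      (∀ p ∈ ps, IndDerives Rules p) → IndDerives Rules j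

/-- A set of judgements is consistent w.r.t. a rule set. -/
def ConsistentL {J : Type} (Rules : Set (List J × J)) (X : Set J) : Prop :=
  ∀ j ∈ X, ∃ (ps : List J), (ps, j) ∈ Rules ∧ ∀ p ∈ ps, p ∈ X

/-- Coinductive derivability: membership in some consistent set. -/
def CoDerives {J : Type} (Rules : Set (List J × J)) (j : J) : Prop :=
  ∃ (X : Set J), ConsistentL Rules X ∧ j ∈ X

/-- Derivability in a generalised inference system (rules + corules):
    membership in a consistent set all of whose elements have a finite
    derivation using both rules and corules. -/
def GenDerives {J : Type} (rules corules : Set (List J × J)) (j : J) : Prop :=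
  ∃ (X : Set J), ConsistentL rules X ∧ (∀ x ∈ X, IndDerives (rules ∪ corules) x) ∧ j ∈ X
/-- Trace results: a finite trace paired with a result, or an infinite trace. -/
abbrev TrRes (C R : Type) := (List C × R) ⊕ Stream' C

/-- The trace-extended rule set `Rules_tr`: finite-trace rules and
    infinite-trace rules. -/
def RulesTr {C R : Type} (Rules : Set (List (C × R) × (C × R))) :
    Set (List (C × TrRes C R) × (C × TrRes C R)) :=
  { r | (∃ (js : List (C × R)) (c : C) (res : R) (σs : List (List C)),
          (js, (c, res)) ∈ Rules ∧ σs.length = js.length ∧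
          r = ((js.zip σs).map (fun p => (p.1.1, Sum.inl (p.2, p.1.2))),
               (c, Sum.inl (c :: σs.flatten, res))))
      ∨ (∃ (js : List (C × R)) (c : C) (res : R) (i : ℕ) (hi : i < js.length)
            (σs : List (List C)) (σ : Stream' C),
          (js, (c, res)) ∈ Rules ∧ σs.length = i ∧
          r = (((js.take i).zip σs).map (fun p => (p.1.1, Sum.inl (p.2, p.1.2))) ++
                 [((js[i]'hi).1, Sum.inr σ)],
               (c, Sum.inr ((c :: σs.flatten) ++ₛ σ)))) }

/-- Equality of rules up to an index `i`: same conclusion configuration, same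
    first `i` premises, same configuration in the `(i+1)`-th premise
    (`i` is 0-based here), with a prescribed result `r'` in that premise. -/
def AgreeUpTo {C R : Type} (Rules : Set (List (C × R) × (C × R)))
    (js : List (C × R)) (c : C) (i : ℕ) (hi : i < js.length) (r' : R) : Prop :=
  ∃ (js' : List (C × R)) (res' : R) (hi' : i < js'.length),
    (js', (c, res')) ∈ Rules ∧ js'.take i = js.take i ∧
    (js'[i]'hi').1 = (js[i]'hi).1 ∧ (js'[i]'hi').2 = r'

/-- The wrong-extended rule set `Rules_wr` over results `R + {wrong}`
    (`none` stands for `wrong`): original rules, wrong-configuration axioms,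
    wrong-result rules and wrong-propagation rules. -/
def RulesWr {C R : Type} (Rules : Set (List (C × R) × (C × R))) :
    Set (List (Judg C R) × Judg C R) :=
  { r | (∃ (js : List (C × R)) (c : C) (res : R),
          (js, (c, res)) ∈ Rules ∧ r = (js.map liftJ, (c, some res)))
      ∨ (∃ (c : C), (¬ ∃ (js : List (C × R)) (res : R), (js, (c, res)) ∈ Rules) ∧
          r = ([], (c, none)))
      ∨ (∃ (js : List (C × R)) (c : C) (res : R) (i : ℕ) (hi : i < js.length) (r' : R),
          (js, (c, res)) ∈ Rules ∧ ¬ AgreeUpTo Rules js c i hi r' ∧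
          r = ((js.take i).map liftJ ++ [((js[i]'hi).1, some r')], (c, none)))
      ∨ (∃ (js : List (C × R)) (c : C) (res : R) (i : ℕ) (hi : i < js.length),
          (js, (c, res)) ∈ Rules ∧
          r = ((js.take i).map liftJ ++ [((js[i]'hi).1, none)], (c, none))) }

/-- The divergence-extended rule set `Rules_∞` over results `R + {∞}`
    (`none` stands for `∞`): original rules plus divergence-propagation
    rules. -/
def RulesInf {C R : Type} (Rules : Set (List (C × R) × (C × R))) :
    Set (List (Judg C R) × Judg C R) :=
  { r | (∃ (js : List (C × R)) (c : C) (res : R),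
          (js, (c, res)) ∈ Rules ∧ r = (js.map liftJ, (c, some res)))
      ∨ (∃ (js : List (C × R)) (c : C) (res : R) (i : ℕ) (hi : i < js.length),
          (js, (c, res)) ∈ Rules ∧
          r = ((js.take i).map liftJ ++ [((js[i]'hi).1, none)], (c, none))) }

/-- The coaxioms for divergence: `c ⇒ ∞` for every configuration `c`. -/
def CoAx (C R : Type) : Set (List (Judg C R) × Judg C R) :=
  { r | ∃ (c : C), r = ([], (c, none)) }

/-- The trace-forgetting map: `(σ, r) ↦ r` and `σ^∞ ↦ ∞`. -/
def uForget {C R : Type} : TrRes C R → Option R :=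
  Sum.elim (fun p => some p.2) (fun _ => none)

/-- the wrong construction is conservative over convergence. -/
theorem wrong_conservative {C R : Type}
    (Rules : Set (List (C × R) × (C × R))) (c : C) (r : R) :
    IndDerives (RulesWr Rules) ((c, some r) : Judg C R) ↔
      IndDerives Rules (c, r) := by
  constructor
  · intro h
    have key : ∀ j : Judg C R, IndDerives (RulesWr Rules) j →
        ∀ c' r', j = (c', some r') → IndDerives Rules (c', r') := by
      intro j hj
      induction hj with
      | node ps j hrule _ ih =>
        intro c' r' hj'
        subst hj'
        rcases hrule with ⟨js, c0, res, hmem, heq⟩ | ⟨c0, _, heq⟩ |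
          ⟨js, c0, res, i, hi, r'', _, _, heq⟩ | ⟨js, c0, res, i, hi, _, heq⟩
        · obtain ⟨h1, h2⟩ := Prod.mk.injEq .. ▸ heq
          obtain ⟨hc, hr⟩ := Prod.mk.injEq .. ▸ h2
          cases hc; cases Option.some.injEq .. ▸ hr
          subst h1
          refine IndDerives.node js (c', r') hmem ?_
          intro p hp
          exact ih (liftJ p) (List.mem_map_of_mem (f := liftJ) hp) p.1 p.2 rfl
        all_goals simp_all
    exact key _ h c r rfl
  · intro h
    have key2 : ∀ j : C × R, IndDerives Rules j →
        IndDerives (RulesWr Rules) (liftJ j) := by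
      intro j h
      induction h with
      | node ps j hmem hprem ih =>
        refine IndDerives.node (ps.map liftJ) (j.1, some j.2) ?_ ?_
        · exact Or.inl ⟨ps, j.1, j.2, hmem, rfl⟩
        · intro p hp
          obtain ⟨q, hq, rfl⟩ := List.mem_map.mp hp
          exact ih q hq
    exact key2 (c, r) h
end

section
/- In the divergence-extended big-step semantics with corules: c ⇒ r with r ∈ R is derivable in the generalised inference system (Rules_∞, coaxioms) if and only if c ⇒ r is inductively derivable in the original rules. -/
lemma inf_coax_to_ind {C R : Type} (Rules : Set (List (C × R) × (C × R)))
    (j : Judg C R) (h : IndDerives (RulesInf Rules ∪ CoAx C R) j) :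
    ∀ c r, j = (c, some r) → IndDerives Rules (c, r) := by
  induction h with
  | node ps j hr _ ih =>
    intro c r hj
    subst hj
    rcases hr with hr | hr
    · rcases hr with ⟨js, c', res, hmem, heq⟩ | ⟨js, c', res, i, hi, hmem, heq⟩
      · obtain ⟨h1, h2⟩ := Prod.mk.injEq .. ▸ heq
        obtain ⟨hc, hres⟩ := Prod.mk.injEq .. ▸ h2
        subst h1; injection hres with hres; subst hc; subst hres
        refine IndDerives.node js (c, r) hmem ?_
        intro p hp
        have := ih (liftJ p) (List.mem_map_of_mem (f := liftJ) hp) p.1 p.2 rfl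
        simpa using this
      · exfalso
        have := (Prod.mk.injEq .. ▸ heq).2
        have := (Prod.mk.injEq .. ▸ this).2
        exact Option.some_ne_none _ this
    · exfalso
      obtain ⟨c', heq⟩ := hr
      have := (Prod.mk.injEq .. ▸ heq).2
      have := (Prod.mk.injEq .. ▸ this).2
      exact Option.some_ne_none _ this

lemma ind_to_inf_coax {C R : Type} (Rules : Set (List (C × R) × (C × R)))
    (j : C × R) (h : IndDerives Rules j) :
    IndDerives (RulesInf Rules ∪ CoAx C R) (liftJ j) := by
  induction h with
  | node ps j hr _ ih =>
    refine IndDerives.node (ps.map liftJ) (liftJ j) ?_ ?_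
    · left; left; exact ⟨ps, j.1, j.2, hr, rfl⟩
    · intro p hp
      obtain ⟨q, hq, rfl⟩ := List.mem_map.mp hp
      exact ih q hq

/-- the divergence-with-coaxioms construction is conservative
    over convergence. -/
theorem div_conservative {C R : Type}
    (Rules : Set (List (C × R) × (C × R))) (c : C) (r : R) :
    GenDerives (RulesInf Rules) (CoAx C R) ((c, some r) : Judg C R) ↔
      IndDerives Rules (c, r) := by
  constructor
  · rintro ⟨X, _, hfin, hmem⟩
    exact inf_coax_to_ind Rules _ (hfin _ hmem) c r rfl
  · intro h
    refine ⟨{j | ∃ c' r', j = (c', some r') ∧ IndDerives Rules (c', r')}, ?_, ?_, c, r, rfl, h⟩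
    · rintro j ⟨c', r', rfl, hd⟩
      rcases hd with ⟨ps, _, hr, hps⟩
      refine ⟨ps.map liftJ, ?_, ?_⟩
      · left; exact ⟨ps, c', r', hr, rfl⟩
      · intro p hp
        obtain ⟨q, hq, rfl⟩ := List.mem_map.mp hp
        exact ⟨q.1, q.2, rfl, hps q hq⟩
    · rintro x ⟨c', r', rfl, hd⟩
      exact ind_to_inf_coax Rules _ hd
end

section
/- Let S ⊆ C be such that for every c ∈ S there exist a rule ρ with conclusion configuration c, premises j_1,…,j_n, and index i ∈ 1..n with j_k inductively derivable for all k < i and C(j_i) ∈ S. Then for every c ∈ S, the judgement c ⇒ ∞ is derivable in the generalised inference system (Rules_∞, coaxioms {c ⇒ ∞}). -/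
private lemma ind_lift {C R : Type} {Rules : Set (List (C × R) × (C × R))}
    {j : C × R} (hj : IndDerives Rules j) :
    IndDerives (RulesInf Rules ∪ CoAx C R) (liftJ j) := by
  induction hj with
  | node ps j hr _ ih =>
    refine IndDerives.node (ps.map liftJ) (liftJ j) ?_ ?_
    · left
      exact Or.inl ⟨ps, j.1, j.2, hr, by simp [liftJ]⟩
    · intro p hp
      obtain ⟨q, hq, rfl⟩ := List.mem_map.mp hp
      exact ih q hq

/-- coinductive proof principle for divergence in the
    corule-based semantics. -/
theorem div_principle {C R : Type}
    (Rules : Set (List (C × R) × (C × R))) (S : Set C)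
    (h : ∀ c ∈ S, ∃ (js : List (C × R)) (res : R) (i : ℕ) (hi : i < js.length),
      (js, (c, res)) ∈ Rules ∧
      (∀ (k : ℕ) (hk : k < i), IndDerives Rules (js[k]'(Nat.lt_trans hk hi))) ∧
      (js[i]'hi).1 ∈ S) :
    ∀ c ∈ S, GenDerives (RulesInf Rules) (CoAx C R) ((c, none) : Judg C R) := by
  intro c hc
  set X : Set (Judg C R) :=
    {p | (∃ c ∈ S, p = (c, none)) ∨ ∃ j, IndDerives Rules j ∧ p = liftJ j} with hX
  refine ⟨X, ?_, ?_, Or.inl ⟨c, hc, rfl⟩⟩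
  · intro p hp
    rcases hp with ⟨c, hcS, rfl⟩ | ⟨j, hj, rfl⟩
    · obtain ⟨js, res, i, hi, hrule, hind, hS⟩ := h c hcS
      refine ⟨(js.take i).map liftJ ++ [((js[i]'hi).1, none)], ?_, ?_⟩
      · exact Or.inr ⟨js, c, res, i, hi, hrule, rfl⟩
      · intro p hp
        rcases List.mem_append.mp hp with hp | hp
        · obtain ⟨q, hq, rfl⟩ := List.mem_map.mp hp
          obtain ⟨k, hk, hqk⟩ := List.mem_iff_getElem.mp hq
          have hki : k < i := lt_of_lt_of_le hk (by simp [List.length_take])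
          have : q = js[k]'(Nat.lt_trans hki hi) := by
            rw [← hqk]; simp [List.getElem_take]
          exact Or.inr ⟨q, this ▸ hind k hki, rfl⟩
        · rcases List.mem_singleton.mp hp with rfl
          exact Or.inl ⟨_, hS, rfl⟩
    · cases hj with
      | node ps j hr hps =>
        refine ⟨ps.map liftJ, Or.inl ⟨ps, j.1, j.2, hr, by simp [liftJ]⟩, ?_⟩
        intro p hp
        obtain ⟨q, hq, rfl⟩ := List.mem_map.mp hp
        exact Or.inr ⟨q, hps q hq, rfl⟩
  · intro x hx
    rcases hx with ⟨c, _, rfl⟩ | ⟨j, hj, rfl⟩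
    · exact IndDerives.node [] _ (Or.inr ⟨c, rfl⟩) (by simp)
    · exact ind_lift hj
end

section
/- The divergence-with-coaxioms semantics is the image of the trace semantics under the trace-forgetting map: c ⇒ u is derivable in (Rules_∞, coaxioms) if and only if there exists a trace result τ with u = u_forget(τ) such that c ⇒ τ is coinductively derivable in Rules_tr, where u_forget(σ, r) = r and u_forget(σ^∞) = ∞. -/
section Aux

variable {C R : Type}

private lemma list_choice {α β : Type*} {P : α → β → Prop} :
    ∀ (l : List α), (∀ p ∈ l, ∃ b, P p b) → ∃ bs, List.Forall₂ P l bs := by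
  intro l h
  induction l with
  | nil => exact ⟨[], List.Forall₂.nil⟩
  | cons a t ih =>
    obtain ⟨b, hb⟩ := h a (by simp)
    obtain ⟨bs, hbs⟩ := ih (fun p hp => h p (by simp [hp]))
    exact ⟨b :: bs, List.Forall₂.cons hb hbs⟩

private lemma coDerives_of_ind {J : Type} (Rs : Set (List J × J)) (j : J)
    (h : IndDerives Rs j) : CoDerives Rs j := by
  refine ⟨{x | IndDerives Rs x}, ?_, h⟩
  intro x hx
  cases hx with
  | node ps _ hr hp => exact ⟨ps, hr, hp⟩

/-- From a finite derivation (in `Rules_∞ ∪ CoAx`) of a complete judgement,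
    build a finite-trace derivation in `Rules_tr`. -/
private lemma ind_to_trace (Rules : Set (List (C × R) × (C × R)))
    {j : Judg C R} (h : IndDerives (RulesInf Rules ∪ CoAx C R) j) :
    ∀ c r, j = (c, some r) → ∃ σ : List C, IndDerives (RulesTr Rules) (c, Sum.inl (σ, r)) := by
  induction h with
  | node ps j hr hps ih =>
    intro c r hj
    subst hj
    rcases hr with (⟨js, c₀, res, hrule, heq⟩ | ⟨js, c₀, res, i, hi, hrule, heq⟩) | ⟨c₀, heq⟩
    · simp only [Prod.mk.injEq, Option.some.injEq] at heq
      obtain ⟨hps_eq, hc, hres⟩ := heq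
      subst hc; subst hres
      have hch : ∀ p ∈ js, ∃ σ : List C,
          IndDerives (RulesTr Rules) (p.1, Sum.inl (σ, p.2)) := by
        intro p hp
        exact ih (liftJ p) (hps_eq ▸ List.mem_map_of_mem (f := liftJ) hp) p.1 p.2 rfl
      obtain ⟨σs, hf2⟩ := list_choice js hch
      refine ⟨c :: σs.flatten, ?_⟩
      refine IndDerives.node _ _ (Or.inl ⟨js, c, r, σs, hrule, hf2.length_eq.symm, rfl⟩) ?_
      intro q hq
      obtain ⟨a, ha, haq⟩ := List.mem_map.mp hq
      have := (List.forall₂_iff_zip.mp hf2).2 ha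
      exact haq ▸ this
    · simp only [Prod.mk.injEq] at heq
      exact absurd heq.2.2 (by simp)
    · simp only [Prod.mk.injEq] at heq
      exact absurd heq.2.2 (by simp)

/-- Inversion of consistency at a finite-trace judgement. -/
private lemma fin_inv (Rules : Set (List (C × R) × (C × R)))
    (Y : Set (C × TrRes C R)) (hY : ConsistentL (RulesTr Rules) Y)
    (c : C) (σ : List C) (r : R) (h : (c, Sum.inl (σ, r)) ∈ Y) :
    ∃ (js : List (C × R)) (σs : List (List C)), (js, (c, r)) ∈ Rules ∧
      σs.length = js.length ∧ σ = c :: σs.flatten ∧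
      ∀ a b, (a, b) ∈ js.zip σs → (a.1, Sum.inl (b, a.2)) ∈ Y := by
  obtain ⟨ps, hr, hps⟩ := hY _ h
  rcases hr with ⟨js, c₀, res, σs, hrule, hlen, heq⟩ |
      ⟨js, c₀, res, i, hi, σs, σ', hrule, hlen, heq⟩
  · simp only [Prod.mk.injEq, Sum.inl.injEq] at heq
    obtain ⟨hps_eq, hc, hσ, hres⟩ := heq
    subst hc; subst hres
    refine ⟨js, σs, hrule, hlen, hσ, ?_⟩
    intro a b hab
    apply hps
    rw [hps_eq]
    exact List.mem_map_of_mem hab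
  · simp only [Prod.mk.injEq] at heq
    exact absurd heq.2.2 (by simp)

/-- From a trace derivation with a finite trace, build a finite derivation
    in `Rules_∞ ∪ CoAx`, by strong induction on the trace length. -/
private lemma trace_to_ind (Rules : Set (List (C × R) × (C × R)))
    (Y : Set (C × TrRes C R)) (hY : ConsistentL (RulesTr Rules) Y) :
    ∀ (n : ℕ) (σ : List C) (c : C) (r : R), σ.length ≤ n →
      (c, Sum.inl (σ, r)) ∈ Y →
      IndDerives (RulesInf Rules ∪ CoAx C R) (c, some r) := by
  intro n
  induction n with
  | zero =>
    intro σ c r hlen hmem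
    obtain ⟨js, σs, hrule, hslen, hσ, hprem⟩ := fin_inv Rules Y hY c σ r hmem
    subst hσ; simp at hlen
  | succ n ih =>
    intro σ c r hlen hmem
    obtain ⟨js, σs, hrule, hslen, hσ, hprem⟩ := fin_inv Rules Y hY c σ r hmem
    refine IndDerives.node (js.map liftJ) _
      (Or.inl (Or.inl ⟨js, c, r, hrule, rfl⟩)) ?_
    intro q hq
    obtain ⟨p, hp, hpq⟩ := List.mem_map.mp hq
    obtain ⟨k, hk, hpk⟩ := List.mem_iff_getElem.mp hp
    have hk' : k < σs.length := by omega
    have hzip : (p, σs[k]) ∈ js.zip σs := by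
      have : (js.zip σs)[k]'(by simp [List.length_zip]; omega) = (js[k], σs[k]) :=
        List.getElem_zip ..
      rw [hpk] at this
      exact this ▸ List.getElem_mem _
    have hYk := hprem p σs[k] hzip
    have hlen' : σs[k].length ≤ n := by
      have hsub : List.Sublist σs[k] σs.flatten :=
        List.sublist_flatten_of_mem (List.getElem_mem hk')
      have := hsub.length_le
      subst hσ
      simp only [List.length_cons] at hlen
      omega
    have := ih σs[k] p.1 p.2 hlen' hYk
    rw [← hpq]
    exact this

/-- For each diverging configuration in a consistent set `X` (w.r.t.
    `Rules_∞`, with finite derivability), produce an infinite trace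
    coinductively derivable in `Rules_tr`. -/
private lemma coderives_of_none (Rules : Set (List (C × R) × (C × R)))
    (X : Set (Judg C R)) (hX : ConsistentL (RulesInf Rules) X)
    (hind : ∀ x ∈ X, IndDerives (RulesInf Rules ∪ CoAx C R) x)
    (c : C) (hc : (c, (none : Option R)) ∈ X) :
    ∃ σ : Stream' C, CoDerives (RulesTr Rules) (c, Sum.inr σ) := by
  classical
  -- step data for each diverging configuration
  have stepEx : ∀ d : {c : C // (c, (none : Option R)) ∈ X},
      ∃ (js : List (C × R)) (res : R) (i : ℕ) (hi : i < js.length)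
        (σs : List (List C)),
        (js, (d.1, res)) ∈ Rules ∧ σs.length = i ∧
        List.Forall₂ (fun (p : C × R) (σ : List C) =>
          IndDerives (RulesTr Rules) (p.1, Sum.inl (σ, p.2))) (js.take i) σs ∧
        ((js[i]'hi).1, (none : Option R)) ∈ X := by
    rintro ⟨c₀, hc₀⟩
    obtain ⟨ps, hr, hps⟩ := hX _ hc₀
    rcases hr with ⟨js, c₁, res, hrule, heq⟩ | ⟨js, c₁, res, i, hi, hrule, heq⟩
    · simp only [Prod.mk.injEq] at heq
      exact absurd heq.2.2 (by simp)
    · simp only [Prod.mk.injEq] at heq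
      obtain ⟨hps_eq, hc1, -⟩ := heq
      subst hc1
      have hch : ∀ p ∈ js.take i, ∃ σ : List C,
          IndDerives (RulesTr Rules) (p.1, Sum.inl (σ, p.2)) := by
        intro p hp
        have hmem : liftJ p ∈ X := by
          apply hps
          rw [hps_eq]
          exact List.mem_append_left _ (List.mem_map_of_mem hp)
        exact ind_to_trace Rules (hind _ hmem) p.1 p.2 rfl
      obtain ⟨σs, hf2⟩ := list_choice _ hch
      have hlen : σs.length = i := by
        have := hf2.length_eq
        simp [List.length_take] at this
        omega
      refine ⟨js, res, i, hi, σs, hrule, hlen, hf2, ?_⟩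
      apply hps
      rw [hps_eq]
      exact List.mem_append_right _ (by simp)
  choose js res i hi σs hrule hlen hf2 hmem using stepEx
  let D := {c : C // (c, (none : Option R)) ∈ X}
  let pre : D → List C := fun d => (σs d).flatten
  let nxt : D → D := fun d => ⟨((js d)[i d]'(hi d)).1, hmem d⟩
  let out : List C × D → C := fun s => match s.1 with
    | x :: _ => x
    | [] => s.2.1
  let nex : List C × D → List C × D := fun s => match s.1 with
    | _ :: rest => (rest, s.2)
    | [] => (pre s.2, nxt s.2)
  let st : List C × D → Stream' C := fun s => Stream'.corec out nex s
  have st_cons : ∀ (x : C) (buf : List C) (d : D),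
      st (x :: buf, d) = Stream'.cons x (st (buf, d)) := by
    intro x buf d
    show Stream'.corec out nex _ = _
    rw [Stream'.corec_eq]
  have st_append : ∀ (buf : List C) (d : D), st (buf, d) = buf ++ₛ st ([], d) := by
    intro buf d
    induction buf with
    | nil => rfl
    | cons x rest ihb =>
      rw [st_cons, ihb, Stream'.cons_append_stream]
  have st_unfold : ∀ d : D, st ([], d) = (d.1 :: pre d) ++ₛ st ([], nxt d) := by
    intro d
    show Stream'.corec out nex _ = _
    rw [Stream'.corec_eq]
    show Stream'.cons d.1 (st (pre d, nxt d)) = _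
    rw [st_append, Stream'.cons_append_stream]
  refine ⟨st ([], ⟨c, hc⟩),
    {j | IndDerives (RulesTr Rules) j} ∪
      {j | ∃ d : D, j = (d.1, Sum.inr (st ([], d)))}, ?_, Or.inr ⟨⟨c, hc⟩, rfl⟩⟩
  rintro j (hj | ⟨d, rfl⟩)
  · cases hj with
    | node ps _ hr hp => exact ⟨ps, hr, fun p hp' => Or.inl (hp p hp')⟩
  · refine ⟨(((js d).take (i d)).zip (σs d)).map
      (fun p => (p.1.1, Sum.inl (p.2, p.1.2))) ++
      [(((js d)[i d]'(hi d)).1, Sum.inr (st ([], nxt d)))], ?_, ?_⟩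
    · refine Or.inr ⟨js d, d.1, res d, i d, hi d, σs d, st ([], nxt d),
        hrule d, hlen d, ?_⟩
      have : st ([], d) = (d.1 :: (σs d).flatten) ++ₛ st ([], nxt d) := st_unfold d
      rw [Prod.mk.injEq, Prod.mk.injEq]
      exact ⟨rfl, rfl, by rw [this]⟩
    · intro p hp
      rcases List.mem_append.mp hp with hp' | hp'
      · obtain ⟨a, ha, hap⟩ := List.mem_map.mp hp'
        have := (List.forall₂_iff_zip.mp (hf2 d)).2 ha
        exact Or.inl (hap ▸ this)
      · rw [List.mem_singleton] at hp'
        exact Or.inr ⟨nxt d, hp'⟩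

end Aux

/-- the divergence-with-coaxioms semantics is the image of the
    trace semantics under the trace-forgetting map. -/
theorem div_abstracts_traces {C R : Type}
    (Rules : Set (List (C × R) × (C × R))) (hbp : BP Rules)
    (c : C) (u : Option R) :
    GenDerives (RulesInf Rules) (CoAx C R) ((c, u) : Judg C R) ↔
      ∃ τ : TrRes C R, u = uForget τ ∧ CoDerives (RulesTr Rules) (c, τ) := by
  constructor
  · rintro ⟨X, hX, hind, hmem⟩
    cases u with
    | none =>
      obtain ⟨σ, hσ⟩ := coderives_of_none Rules X hX hind c hmem
      exact ⟨Sum.inr σ, rfl, hσ⟩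
    | some r =>
      obtain ⟨σ, hσ⟩ := ind_to_trace Rules (hind _ hmem) c r rfl
      exact ⟨Sum.inl (σ, r), rfl, coDerives_of_ind _ _ hσ⟩
  · rintro ⟨τ, hu, Y, hY, hmemY⟩
    refine ⟨{j : Judg C R | ∃ τ', j.2 = uForget τ' ∧ (j.1, τ') ∈ Y}, ?_, ?_, ⟨τ, hu, hmemY⟩⟩
    · rintro ⟨c₀, u₀⟩ ⟨τ', hu', hτ'⟩
      dsimp only at hu' hτ'
      obtain ⟨ps, hr, hps⟩ := hY _ hτ'
      rcases hr with ⟨js, c₁, res, σs, hrule, hlen, heq⟩ |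
          ⟨js, c₁, res, i, hi, σs, σ', hrule, hlen, heq⟩
      · -- finite-trace rule
        simp only [Prod.mk.injEq] at heq
        obtain ⟨hps_eq, hc1, hτeq⟩ := heq
        subst hc1
        subst hτeq
        refine ⟨js.map liftJ, Or.inl ⟨js, c₀, res, hrule, by rw [hu']; rfl⟩, ?_⟩
        intro q hq
        obtain ⟨p, hp, hpq⟩ := List.mem_map.mp hq
        obtain ⟨k, hk, hpk⟩ := List.mem_iff_getElem.mp hp
        have hk' : k < σs.length := by omega
        have hzip : (p, σs[k]) ∈ js.zip σs := by
          have : (js.zip σs)[k]'(by simp [List.length_zip]; omega) = (js[k], σs[k]) :=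
            List.getElem_zip ..
          rw [hpk] at this
          exact this ▸ List.getElem_mem _
        have hYp : (p.1, Sum.inl (σs[k], p.2)) ∈ Y := by
          apply hps
          rw [hps_eq]
          exact List.mem_map_of_mem hzip
        subst hpq
        exact ⟨Sum.inl (σs[k], p.2), rfl, hYp⟩
      · -- infinite-trace rule
        simp only [Prod.mk.injEq] at heq
        obtain ⟨hps_eq, hc1, hτeq⟩ := heq
        subst hc1
        refine ⟨(js.take i).map liftJ ++ [((js[i]'hi).1, none)],
          Or.inr ⟨js, c₀, res, i, hi, hrule, by rw [hu', hτeq]; rfl⟩, ?_⟩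
        intro q hq
        rcases List.mem_append.mp hq with hq' | hq'
        · obtain ⟨p, hp, hpq⟩ := List.mem_map.mp hq'
          obtain ⟨k, hk, hpk⟩ := List.mem_iff_getElem.mp hp
          have hki : k < i := by
            rw [List.length_take] at hk; omega
          have hk' : k < σs.length := by omega
          have hzip : (p, σs[k]) ∈ (js.take i).zip σs := by
            have : ((js.take i).zip σs)[k]'(by simp [List.length_zip, List.length_take]; omega)
                = ((js.take i)[k]'(by simp [List.length_take]; omega), σs[k]) :=
              List.getElem_zip ..
            rw [hpk] at this
            exact this ▸ List.getElem_mem _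
          have hYp : (p.1, Sum.inl (σs[k], p.2)) ∈ Y := by
            apply hps
            rw [hps_eq]
            exact List.mem_append_left _ (List.mem_map_of_mem hzip)
          subst hpq
          exact ⟨Sum.inl (σs[k], p.2), rfl, hYp⟩
        · rw [List.mem_singleton] at hq'
          have hYp : ((js[i]'hi).1, Sum.inr σ') ∈ Y := by
            apply hps
            rw [hps_eq]
            exact List.mem_append_right _ (by simp)
          subst hq'
          exact ⟨Sum.inr σ', rfl, hYp⟩
    · rintro ⟨c₀, u₀⟩ ⟨τ', hu', hτ'⟩
      dsimp only at hu' hτ'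
      cases τ' with
      | inl p =>
        have : u₀ = some p.2 := hu'
        subst this
        exact trace_to_ind Rules Y hY p.1.length p.1 c₀ p.2 le_rfl hτ'
      | inr σ =>
        have : u₀ = none := hu'
        subst this
        exact IndDerives.node [] _ (Or.inr ⟨c₀, rfl⟩) (by simp)
end
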